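/- Let r ≥ 3, d ≥ 3 and m ≥ d + 2, and set a = m − d − 1 and b = ⌈d/2⌉. Let T'' be the r-uniform supertree obtained from the loose path P_d^r by attaching a pendant edges at the joint vertex v_b and one pendant edge at the joint vertex v_{b+1} (each pendant edge consists of the attachment vertex together with r − 1 new vertices). Then φ(T'', x) = x^{(a+1)(r−1)}·φ(P_d^r, x) − x^{(a+2)(r−1)−2}·φ(P_{b−1}^r, x)·φ(P_{d−b−1}^r, x) − a·x^{(a+1)(r−1)−2}·φ(P_{b−2}^r, x)·φ(P_{d−b+1}^r, x). -/

import Mathlib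

open Classical

noncomputable section

/-- A finite hypergraph: a finite vertex set together with a finite set of edges,
each edge being a finite set of vertices. -/
structure FinHypergraph (α : Type*) where
  verts : Finset α
  edges : Finset (Finset α)

namespace FinHypergraph

variable {α : Type*}

/-- Every edge of `H` is a subset of the vertex set of `H`. -/
def WellFormed (H : FinHypergraph α) : Prop := ∀ e ∈ H.edges, e ⊆ H.verts

/-- `H` is `r`-uniform: every edge has exactly `r` vertices. -/
def Uniform (H : FinHypergraph α) (r : ℕ) : Prop := ∀ e ∈ H.edges, e.card = r

/-- A set of edges is a matching if its members are pairwise disjoint. -/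
def IsMatchingSet (M : Finset (Finset α)) : Prop :=
  ∀ e ∈ M, ∀ f ∈ M, e ≠ f → Disjoint e f

/-- `m(H,k)`: the number of matchings of `H` consisting of exactly `k` edges. -/
noncomputable def matchCount (H : FinHypergraph α) (k : ℕ) : ℕ :=
  (H.edges.powerset.filter (fun M => M.card = k ∧ IsMatchingSet M)).card

/-- The matching polynomial `φ(H,x) = Σ_k (-1)^k m(H,k) x^(n - r·k)` of an
`r`-uniform hypergraph `H` with `n` vertices, evaluated at a real number `x`. -/
noncomputable def matchPoly (H : FinHypergraph α) (r : ℕ) (x : ℝ) : ℝ :=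
  ∑ k ∈ Finset.range (H.verts.card + 1),
    (-1 : ℝ) ^ k * (H.matchCount k : ℝ) * x ^ (H.verts.card - r * k)

/-- `H − S`: delete the vertices of `S` and all edges meeting `S`. -/
def removeVerts (H : FinHypergraph α) (S : Finset α) : FinHypergraph α :=
  ⟨H.verts \ S, H.edges.filter (fun e => Disjoint e S)⟩

/-- The edges of the `r`-uniform loose path of length `p` along the vertex labelling `w`:
the `i`-th edge consists of the `r` vertices `w (i*(r-1)), …, w ((i+1)*(r-1))`, so that
consecutive edges share exactly one vertex. -/
def loosePathEdges (r p : ℕ) (w : ℕ → α) : Finset (Finset α) :=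
  (Finset.range p).image (fun i => (Finset.Icc (i * (r - 1)) ((i + 1) * (r - 1))).image w)

/-- `P` is an `r`-uniform loose path with `m` edges (`P_m^r`); for `m = 0` it is a single
vertex with no edge. -/
def IsLoosePath (r m : ℕ) (P : FinHypergraph α) : Prop :=
  ∃ w : ℕ → α, Set.InjOn w (Set.Iic (m * (r - 1))) ∧
    P.verts = (Finset.Icc 0 (m * (r - 1))).image w ∧
    P.edges = loosePathEdges r m w

/-- The `r`-uniform loose path with `m` edges realized along the vertex labelling `w`. -/
def pathHypergraph (r m : ℕ) (w : ℕ → α) : FinHypergraph α :=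
  ⟨(Finset.Icc 0 (m * (r - 1))).image w, loosePathEdges r m w⟩

/-- `T` is obtained from `H` by attaching `k` pendant edges at the vertex `u`: each new
edge consists of `u` together with `r - 1` new vertices, the new vertices of distinct new
edges being distinct. -/
def IsPendantEdgesAttach (r k : ℕ) (H : FinHypergraph α) (u : α) (T : FinHypergraph α) : Prop :=
  u ∈ H.verts ∧ ∃ F : Fin k → Finset α,
    (∀ i, (F i).card = r - 1) ∧
    (∀ i, Disjoint (F i) H.verts) ∧
    (∀ i j, i ≠ j → Disjoint (F i) (F j)) ∧
    T.verts = H.verts ∪ Finset.univ.biUnion F ∧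
    T.edges = H.edges ∪ Finset.univ.image (fun i => insert u (F i))

end FinHypergraph
section Helpers

variable {α : Type*} {w : ℕ → α} {D : Set ℕ}

open Finset

lemma injOn_image_mem (hw : Set.InjOn w D) {A : Finset ℕ} (hA : ↑A ⊆ D) {x : ℕ}
    (hx : x ∈ D) : w x ∈ A.image w ↔ x ∈ A := by
  constructor
  · rintro h
    obtain ⟨y, hy, hxy⟩ := Finset.mem_image.1 h
    rwa [hw (hA hy) hx hxy] at hy
  · exact fun h => Finset.mem_image_of_mem w h

lemma injOn_image_eq_iff (hw : Set.InjOn w D) {A B : Finset ℕ} (hA : ↑A ⊆ D)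
    (hB : ↑B ⊆ D) : A.image w = B.image w ↔ A = B := by
  constructor
  · intro h
    ext x
    constructor
    · intro hx
      have := Finset.mem_image_of_mem w hx
      rw [h, injOn_image_mem hw hB (hA hx)] at this
      exact this
    · intro hx
      have := Finset.mem_image_of_mem w hx
      rw [← h, injOn_image_mem hw hA (hB hx)] at this
      exact this
  · intro h; rw [h]

lemma injOn_disjoint_image (hw : Set.InjOn w D) {A B : Finset ℕ} (hA : ↑A ⊆ D)
    (hB : ↑B ⊆ D) : Disjoint (A.image w) (B.image w) ↔ Disjoint A B := by
  constructor
  · intro h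
    rw [Finset.disjoint_left] at h ⊢
    intro x hx hx'
    exact h (Finset.mem_image_of_mem w hx) (Finset.mem_image_of_mem w hx')
  · intro h
    rw [Finset.disjoint_left] at h ⊢
    rintro a ha ha'
    obtain ⟨x, hx, rfl⟩ := Finset.mem_image.1 ha
    rw [injOn_image_mem hw hB (hA hx)] at ha'
    exact h hx ha'

lemma injOn_image_sdiff (hw : Set.InjOn w D) {A B : Finset ℕ} (hA : ↑A ⊆ D)
    (hB : ↑B ⊆ D) : (A \ B).image w = A.image w \ B.image w := by
  ext a
  simp only [Finset.mem_image, Finset.mem_sdiff]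
  constructor
  · rintro ⟨x, ⟨hxA, hxB⟩, rfl⟩
    refine ⟨⟨x, hxA, rfl⟩, fun h => hxB ?_⟩
    have : w x ∈ B.image w := Finset.mem_image.2 h
    rwa [injOn_image_mem hw hB (hA hxA)] at this
  · rintro ⟨⟨x, hxA, rfl⟩, h⟩
    refine ⟨x, ⟨hxA, fun hxB => h ?_⟩, rfl⟩
    exact ⟨x, hxB, rfl⟩

end Helpers

namespace FinHypergraph

variable {α : Type*}

/-- The finset of all matchings of `H`. -/
noncomputable def matchings (H : FinHypergraph α) : Finset (Finset (Finset α)) :=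
  H.edges.powerset.filter (fun M => IsMatchingSet M)

lemma mem_matchings {H : FinHypergraph α} {M : Finset (Finset α)} :
    M ∈ H.matchings ↔ M ⊆ H.edges ∧ IsMatchingSet M := by
  simp [matchings, Finset.mem_filter, Finset.mem_powerset]

lemma matchCount_eq {H : FinHypergraph α} (k : ℕ) :
    H.matchCount k = (H.matchings.filter (fun M => M.card = k)).card := by
  unfold matchCount matchings
  congr 1
  rw [Finset.filter_filter]
  apply Finset.filter_congr
  intro M _
  simp [and_comm]

lemma matching_vertbound {H : FinHypergraph α} {r : ℕ} (hr : 1 ≤ r)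
    (hwf : H.WellFormed) (hu : H.Uniform r) {M : Finset (Finset α)}
    (hM : M ∈ H.matchings) : r * M.card ≤ H.verts.card := by
  classical
  obtain ⟨hME, hMm⟩ := mem_matchings.1 hM
  have hcard : (M.biUnion id).card = r * M.card := by
    rw [Finset.card_biUnion]
    · rw [Finset.sum_congr rfl (fun e he => (by simpa using hu e (hME he) : (id e).card = r)),
        Finset.sum_const, smul_eq_mul, mul_comm]
    · intro e he f hf hef
      exact hMm e he f hf hef
  calc r * M.card = (M.biUnion id).card := hcard.symm
    _ ≤ H.verts.card := Finset.card_le_card (by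
        intro a ha
        obtain ⟨e, he, hae⟩ := Finset.mem_biUnion.1 ha
        exact hwf e (hME he) hae)

lemma card_le_of_mem_matchings {H : FinHypergraph α} {r : ℕ} (hr : 1 ≤ r)
    (hwf : H.WellFormed) (hu : H.Uniform r) {M : Finset (Finset α)}
    (hM : M ∈ H.matchings) : M.card ≤ H.verts.card :=
  le_trans (Nat.le_mul_of_pos_left _ hr) (matching_vertbound hr hwf hu hM)

lemma matchPoly_eq_sum {H : FinHypergraph α} {r : ℕ} (hr : 1 ≤ r)
    (hwf : H.WellFormed) (hu : H.Uniform r) (x : ℝ) :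
    H.matchPoly r x
      = ∑ M ∈ H.matchings, (-1 : ℝ) ^ M.card * x ^ (H.verts.card - r * M.card) := by
  classical
  rw [matchPoly]
  rw [← Finset.sum_fiberwise_of_maps_to (g := fun M : Finset (Finset α) => M.card)
    (t := Finset.range (H.verts.card + 1))
    (fun M hM => Finset.mem_range.2 (Nat.lt_succ_of_le (card_le_of_mem_matchings hr hwf hu hM)))]
  apply Finset.sum_congr rfl
  intro k _
  rw [matchCount_eq k]
  rw [Finset.sum_congr rfl (g := fun _ => (-1:ℝ)^k * x ^ (H.verts.card - r*k))
    (fun M hM => by rw [(Finset.mem_filter.1 hM).2]),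
    Finset.sum_const, nsmul_eq_mul]
  ring

end FinHypergraph
namespace FinHypergraph

variable {α : Type*}

lemma IsMatchingSet.subset {M N : Finset (Finset α)} (h : IsMatchingSet N)
    (hMN : M ⊆ N) : IsMatchingSet M :=
  fun e he f hf hef => h e (hMN he) f (hMN hf) hef

lemma edges_family_disjoint {A B : FinHypergraph α} {r : ℕ} (hr : 1 ≤ r)
    (hwA : A.WellFormed) (hwB : B.WellFormed) (huA : A.Uniform r)
    (hd : Disjoint A.verts B.verts) : Disjoint A.edges B.edges := by
  rw [Finset.disjoint_left]
  intro e heA heB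
  have h1 : e ⊆ A.verts := hwA e heA
  have h2 : e ⊆ B.verts := hwB e heB
  have : e = ∅ := by
    rw [← Finset.subset_empty]
    intro x hx
    exact absurd hx (by
      intro hx'
      exact (Finset.disjoint_left.1 hd (h1 hx')) (h2 hx'))
  have := huA e heA
  rw [‹e = ∅›] at this
  simp at this
  omega

lemma matchPoly_union {A B : FinHypergraph α} {r : ℕ} (hr : 1 ≤ r)
    (hwA : A.WellFormed) (hwB : B.WellFormed) (huA : A.Uniform r) (huB : B.Uniform r)
    (hd : Disjoint A.verts B.verts) (x : ℝ) :
    matchPoly ⟨A.verts ∪ B.verts, A.edges ∪ B.edges⟩ r x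
      = A.matchPoly r x * B.matchPoly r x := by
  classical
  set T : FinHypergraph α := ⟨A.verts ∪ B.verts, A.edges ∪ B.edges⟩ with hT
  have hwT : T.WellFormed := by
    intro e he
    rcases Finset.mem_union.1 he with h | h
    · exact (hwA e h).trans Finset.subset_union_left
    · exact (hwB e h).trans Finset.subset_union_right
  have huT : T.Uniform r := by
    intro e he
    rcases Finset.mem_union.1 he with h | h
    · exact huA e h
    · exact huB e h
  have hedis : Disjoint A.edges B.edges := edges_family_disjoint hr hwA hwB huA hd
  rw [matchPoly_eq_sum hr hwT huT, matchPoly_eq_sum hr hwA huA,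
    matchPoly_eq_sum hr hwB huB, Finset.sum_mul_sum, ← Finset.sum_product']
  have hcardT : T.verts.card = A.verts.card + B.verts.card :=
    Finset.card_union_of_disjoint hd
  refine Finset.sum_nbij' (i := fun M => (M ∩ A.edges, M ∩ B.edges))
    (j := fun p => p.1 ∪ p.2) ?_ ?_ ?_ ?_ ?_
  · intro M hM
    obtain ⟨hME, hMm⟩ := mem_matchings.1 hM
    refine Finset.mem_product.2 ⟨mem_matchings.2 ⟨Finset.inter_subset_right, ?_⟩,
      mem_matchings.2 ⟨Finset.inter_subset_right, ?_⟩⟩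
    · exact hMm.subset Finset.inter_subset_left
    · exact hMm.subset Finset.inter_subset_left
  · rintro ⟨MA, MB⟩ hp
    obtain ⟨hA', hB'⟩ := Finset.mem_product.1 hp
    obtain ⟨hAE, hAm⟩ := mem_matchings.1 hA'
    obtain ⟨hBE, hBm⟩ := mem_matchings.1 hB'
    refine mem_matchings.2 ⟨Finset.union_subset (hAE.trans Finset.subset_union_left)
      (hBE.trans Finset.subset_union_right), ?_⟩
    intro e he f hf hef
    rcases Finset.mem_union.1 he with he' | he' <;> rcases Finset.mem_union.1 hf with hf' | hf'
    · exact hAm e he' f hf' hef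
    · exact hd.mono (hwA e (hAE he')) (hwB f (hBE hf'))
    · exact (hd.mono (hwA f (hAE hf')) (hwB e (hBE he'))).symm
    · exact hBm e he' f hf' hef
  · intro M hM
    obtain ⟨hME, _⟩ := mem_matchings.1 hM
    simp only
    rw [← Finset.inter_union_distrib_left, Finset.inter_eq_left]
    exact hME
  · rintro ⟨MA, MB⟩ hp
    obtain ⟨hA', hB'⟩ := Finset.mem_product.1 hp
    obtain ⟨hAE, _⟩ := mem_matchings.1 hA'
    obtain ⟨hBE, _⟩ := mem_matchings.1 hB'
    have h1 : (MA ∪ MB) ∩ A.edges = MA := by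
      apply Finset.Subset.antisymm
      · intro e he
        obtain ⟨he1, he2⟩ := Finset.mem_inter.1 he
        rcases Finset.mem_union.1 he1 with h | h
        · exact h
        · exact absurd he2 (Finset.disjoint_right.1 hedis (hBE h))
      · exact Finset.subset_inter Finset.subset_union_left hAE
    have h2 : (MA ∪ MB) ∩ B.edges = MB := by
      apply Finset.Subset.antisymm
      · intro e he
        obtain ⟨he1, he2⟩ := Finset.mem_inter.1 he
        rcases Finset.mem_union.1 he1 with h | h
        · exact absurd he2 (Finset.disjoint_left.1 hedis (hAE h))
        · exact h
      · exact Finset.subset_inter Finset.subset_union_right hBE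
    simp only [h1, h2]
  · intro M hM
    obtain ⟨hME, hMm⟩ := mem_matchings.1 hM
    have hMA : M ∩ A.edges ∈ A.matchings :=
      mem_matchings.2 ⟨Finset.inter_subset_right, hMm.subset Finset.inter_subset_left⟩
    have hMB : M ∩ B.edges ∈ B.matchings :=
      mem_matchings.2 ⟨Finset.inter_subset_right, hMm.subset Finset.inter_subset_left⟩
    have hMsplit : M = (M ∩ A.edges) ∪ (M ∩ B.edges) := by
      rw [← Finset.inter_union_distrib_left]
      exact (Finset.inter_eq_left.2 hME).symm
    have hdisM : Disjoint (M ∩ A.edges) (M ∩ B.edges) :=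
      hedis.mono Finset.inter_subset_right Finset.inter_subset_right
    have hcardM : M.card = (M ∩ A.edges).card + (M ∩ B.edges).card := by
      conv_lhs => rw [hMsplit]
      exact Finset.card_union_of_disjoint hdisM
    have hbA := matching_vertbound hr hwA huA hMA
    have hbB := matching_vertbound hr hwB huB hMB
    have hrkA : r * (M ∩ A.edges).card ≤ A.verts.card := hbA
    have hrkB : r * (M ∩ B.edges).card ≤ B.verts.card := hbB
    have hexp : (A.verts ∪ B.verts).card - r * ((M ∩ A.edges).card + (M ∩ B.edges).card)
        = (A.verts.card - r * (M ∩ A.edges).card) + (B.verts.card - r * (M ∩ B.edges).card) := by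
      have h1 : r * ((M ∩ A.edges).card + (M ∩ B.edges).card)
          = r * (M ∩ A.edges).card + r * (M ∩ B.edges).card := Nat.mul_add r _ _
      have h2 := hcardT
      simp only [hT] at h2
      omega
    simp only
    rw [hcardM, hexp, pow_add, pow_add]
    ring

lemma matchPoly_no_edges {r : ℕ} (V : Finset α) (x : ℝ) :
    matchPoly ⟨V, ∅⟩ r x = x ^ V.card := by
  classical
  have hm0 : matchCount ⟨V, (∅ : Finset (Finset α))⟩ 0 = 1 := by
    unfold matchCount
    rw [Finset.powerset_empty]
    rw [Finset.filter_singleton]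
    simp [IsMatchingSet]
  have hmk : ∀ k, k ≠ 0 → matchCount ⟨V, (∅ : Finset (Finset α))⟩ k = 0 := by
    intro k hk
    unfold matchCount
    rw [Finset.powerset_empty, Finset.filter_singleton]
    simp only [Finset.card_empty]
    split_ifs with h
    · exact absurd h.1.symm hk
    · simp [h]
  rw [matchPoly]
  rw [Finset.sum_eq_single 0]
  · simp [hm0]
  · intro k _ hk
    simp [hmk k hk]
  · intro h
    simp at h

lemma removeVerts_wf {H : FinHypergraph α} (hwf : H.WellFormed) (S : Finset α) :
    (H.removeVerts S).WellFormed := by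
  intro e he
  obtain ⟨he1, he2⟩ := Finset.mem_filter.1 he
  intro x hx
  exact Finset.mem_sdiff.2 ⟨hwf e he1 hx, fun hxS => (Finset.disjoint_left.1 he2 hx) hxS⟩

lemma removeVerts_unif {H : FinHypergraph α} {r : ℕ} (hu : H.Uniform r) (S : Finset α) :
    (H.removeVerts S).Uniform r :=
  fun e he => hu e (Finset.mem_filter.1 he).1

lemma removeVerts_removeVerts (H : FinHypergraph α) (S S' : Finset α) :
    (H.removeVerts S).removeVerts S' = H.removeVerts (S ∪ S') := by
  unfold removeVerts
  congr 1
  · ext x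
    simp only [Finset.mem_sdiff, Finset.mem_union]
    tauto
  · rw [Finset.filter_filter]
    apply Finset.filter_congr
    intro e _
    simp [Finset.disjoint_union_right]

end FinHypergraph
namespace FinHypergraph

variable {α : Type*}

lemma matchPoly_congr {T T' : FinHypergraph α} (hv : T.verts = T'.verts)
    (he : T.edges = T'.edges) (r : ℕ) (x : ℝ) : T.matchPoly r x = T'.matchPoly r x := by
  obtain ⟨v, e⟩ := T
  obtain ⟨v', e'⟩ := T'
  simp only at hv he
  subst hv; subst he
  rfl

lemma matchPoly_add_isolated {H : FinHypergraph α} {r : ℕ} (hr : 1 ≤ r)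
    (hwf : H.WellFormed) (hu : H.Uniform r) {I : Finset α} (hI : Disjoint H.verts I)
    {T : FinHypergraph α} (hTv : T.verts = H.verts ∪ I) (hTe : T.edges = H.edges) (x : ℝ) :
    T.matchPoly r x = x ^ I.card * H.matchPoly r x := by
  have h1 : T.matchPoly r x = matchPoly ⟨H.verts ∪ I, H.edges ∪ (∅ : Finset (Finset α))⟩ r x :=
    matchPoly_congr hTv (by rw [hTe, Finset.union_empty]) r x
  have h2 := matchPoly_union (A := H) (B := (⟨I, ∅⟩ : FinHypergraph α)) hr hwf
    (fun e he => by simp [FinHypergraph.WellFormed] at he) hu (fun e he => by simp at he) hI x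
  rw [matchPoly_no_edges] at h2
  exact h1.trans (h2.trans (mul_comm _ _))

/-- The key split lemma: a hypergraph whose vertices split into the vertices of `A`,
isolated vertices `I`, and the vertices of `B`, with edges those of `A` and `B`. -/
lemma matchPoly_split {A B : FinHypergraph α} {r : ℕ} (hr : 1 ≤ r)
    (hwA : A.WellFormed) (hwB : B.WellFormed) (huA : A.Uniform r) (huB : B.Uniform r)
    (hdAB : Disjoint A.verts B.verts) {I : Finset α}
    (hdI : Disjoint (A.verts ∪ B.verts) I) {T : FinHypergraph α}
    (hTv : T.verts = (A.verts ∪ I) ∪ B.verts) (hTe : T.edges = A.edges ∪ B.edges) (x : ℝ) :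
    T.matchPoly r x = x ^ I.card * (A.matchPoly r x * B.matchPoly r x) := by
  set A' : FinHypergraph α := ⟨A.verts ∪ I, A.edges⟩ with hA'
  have hwA' : A'.WellFormed := fun e he => (hwA e he).trans Finset.subset_union_left
  have huA' : A'.Uniform r := huA
  have h1 : T.matchPoly r x = matchPoly ⟨A'.verts ∪ B.verts, A'.edges ∪ B.edges⟩ r x :=
    matchPoly_congr hTv hTe r x
  have hdA'B : Disjoint A'.verts B.verts := by
    show Disjoint (A.verts ∪ I) B.verts
    rw [Finset.disjoint_union_left]
    exact ⟨hdAB, ((Finset.disjoint_union_left.1 hdI).2).symm⟩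
  rw [h1, matchPoly_union hr hwA' hwB huA' huB hdA'B x]
  have h2 : A'.matchPoly r x = x ^ I.card * A.matchPoly r x :=
    matchPoly_add_isolated (H := A) (T := A') hr hwA huA
      (Finset.disjoint_union_left.1 hdI).1 rfl rfl x
  rw [h2, mul_assoc]

/-- Pendant edge recurrence: attaching one pendant edge `{u} ∪ S` at `u`. -/
lemma matchPoly_pendant {H : FinHypergraph α} {r : ℕ} (hr : 2 ≤ r)
    (hwf : H.WellFormed) (hu : H.Uniform r) {u : α} (huv : u ∈ H.verts)
    {S : Finset α} (hS : S.card = r - 1) (hdS : Disjoint S H.verts)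
    {T : FinHypergraph α} (hTv : T.verts = H.verts ∪ S)
    (hTe : T.edges = insert (insert u S) H.edges) (x : ℝ) :
    T.matchPoly r x = x ^ (r - 1) * H.matchPoly r x
      - (H.removeVerts {u}).matchPoly r x := by
  classical
  have hr1 : 1 ≤ r := by omega
  set e0 : Finset α := insert u S with he0
  have huS : u ∉ S := Finset.disjoint_right.1 hdS huv
  have he0card : e0.card = r := by
    rw [he0, Finset.card_insert_of_notMem huS, hS]; omega
  have hSne : S.Nonempty := by
    rw [← Finset.card_pos, hS]; omega
  have he0H : e0 ∉ H.edges := by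
    intro h
    have := hwf e0 h
    obtain ⟨s, hs⟩ := hSne
    exact (Finset.disjoint_left.1 hdS hs) (this (Finset.mem_insert_of_mem hs))
  have hwT : T.WellFormed := by
    intro e he
    rw [hTe] at he
    rcases Finset.mem_insert.1 he with h | h
    · subst h
      rw [hTv]
      intro y hy
      rcases Finset.mem_insert.1 hy with h | h
      · exact Finset.mem_union_left _ (h ▸ huv)
      · exact Finset.mem_union_right _ h
    · exact (hwf e h).trans (hTv ▸ Finset.subset_union_left)
  have huT : T.Uniform r := by
    intro e he
    rw [hTe] at he
    rcases Finset.mem_insert.1 he with h | h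
    · rw [h]; exact he0card
    · exact hu e h
  have hwR : (H.removeVerts {u}).WellFormed := removeVerts_wf hwf _
  have huR : (H.removeVerts {u}).Uniform r := removeVerts_unif hu _
  have hcT : T.verts.card = H.verts.card + (r - 1) := by
    rw [hTv, Finset.card_union_of_disjoint hdS.symm, hS]
  have hcR : (H.removeVerts {u}).verts.card = H.verts.card - 1 := by
    show (H.verts \ {u}).card = H.verts.card - 1
    rw [Finset.sdiff_singleton_eq_erase, Finset.card_erase_of_mem huv]
  have huvpos : 1 ≤ H.verts.card := Finset.card_pos.2 ⟨u, huv⟩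
  rw [matchPoly_eq_sum hr1 hwT huT, matchPoly_eq_sum hr1 hwf hu,
    matchPoly_eq_sum hr1 hwR huR]
  rw [← Finset.sum_filter_add_sum_filter_not T.matchings (fun M => e0 ∈ M)]
  have hpart2 : T.matchings.filter (fun M => ¬ e0 ∈ M) = H.matchings := by
    ext M
    simp only [Finset.mem_filter, mem_matchings]
    constructor
    · rintro ⟨⟨hME, hMm⟩, hMe0⟩
      refine ⟨?_, hMm⟩
      intro e he
      have := hME he
      rw [hTe] at this
      rcases Finset.mem_insert.1 this with h | h
      · exact absurd (h ▸ he) hMe0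
      · exact h
    · rintro ⟨hME, hMm⟩
      exact ⟨⟨hME.trans (hTe ▸ Finset.subset_insert _ _), hMm⟩,
        fun h => he0H (hME h)⟩
  rw [hpart2]
  have hsum1 : ∑ M ∈ H.matchings, (-1 : ℝ) ^ M.card * x ^ (T.verts.card - r * M.card)
      = x ^ (r - 1) * ∑ M ∈ H.matchings, (-1 : ℝ) ^ M.card * x ^ (H.verts.card - r * M.card) := by
    rw [Finset.mul_sum]
    apply Finset.sum_congr rfl
    intro M hM
    have hb := matching_vertbound hr1 hwf hu hM
    have : T.verts.card - r * M.card = (r - 1) + (H.verts.card - r * M.card) := by omega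
    rw [this, pow_add]
    ring
  rw [hsum1]
  have hsum2 : ∑ M ∈ T.matchings.filter (fun M => e0 ∈ M), (-1 : ℝ) ^ M.card * x ^ (T.verts.card - r * M.card)
      = - ∑ M ∈ (H.removeVerts {u}).matchings,
          (-1 : ℝ) ^ M.card * x ^ ((H.removeVerts {u}).verts.card - r * M.card) := by
    rw [← Finset.sum_neg_distrib]
    refine Finset.sum_nbij' (i := fun M => M.erase e0) (j := fun M => insert e0 M) ?_ ?_ ?_ ?_ ?_
    · intro M hM
      obtain ⟨hM', hMe0⟩ := Finset.mem_filter.1 hM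
      obtain ⟨hME, hMm⟩ := mem_matchings.1 hM'
      refine mem_matchings.2 ⟨?_, hMm.subset (Finset.erase_subset _ _)⟩
      intro f hf
      obtain ⟨hfne, hfM⟩ := Finset.mem_erase.1 hf
      have hfH : f ∈ H.edges := by
        have := hME hfM
        rw [hTe] at this
        rcases Finset.mem_insert.1 this with h | h
        · exact absurd h hfne
        · exact h
      refine Finset.mem_filter.2 ⟨hfH, ?_⟩
      have hdisj : Disjoint f e0 := (hMm e0 hMe0 f hfM hfne.symm).symm
      rw [Finset.disjoint_singleton_right]
      intro huf
      exact (Finset.disjoint_left.1 hdisj huf) (Finset.mem_insert_self u S)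
    · intro M hM
      obtain ⟨hME, hMm⟩ := mem_matchings.1 hM
      have hdise0 : ∀ g ∈ M, Disjoint e0 g := by
        intro g hg
        have hgH := Finset.mem_filter.1 (hME hg)
        have hgu : u ∉ g := by
          have := hgH.2
          rw [Finset.disjoint_singleton_right] at this
          exact this
        have hgS : Disjoint S g := hdS.mono_right (hwf g hgH.1)
        rw [he0, Finset.insert_eq, Finset.disjoint_union_left]
        exact ⟨Finset.disjoint_singleton_left.2 hgu, hgS⟩
      refine Finset.mem_filter.2 ⟨mem_matchings.2 ⟨?_, ?_⟩, Finset.mem_insert_self _ _⟩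
      · intro f hf
        rw [hTe]
        rcases Finset.mem_insert.1 hf with h | h
        · exact h ▸ Finset.mem_insert_self _ _
        · exact Finset.mem_insert_of_mem ((Finset.mem_filter.1 (hME h)).1)
      · intro f hf g hg hfg
        rcases Finset.mem_insert.1 hf with hf' | hf' <;>
          rcases Finset.mem_insert.1 hg with hg' | hg'
        · exact absurd (hf'.trans hg'.symm) hfg
        · exact hf' ▸ hdise0 g hg'
        · exact hg' ▸ (hdise0 f hf').symm
        · exact hMm f hf' g hg' hfg
    · intro M hM
      exact Finset.insert_erase (Finset.mem_filter.1 hM).2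
    · intro M hM
      apply Finset.erase_insert
      intro h
      obtain ⟨hME, _⟩ := mem_matchings.1 hM
      have := (Finset.mem_filter.1 (hME h)).1
      exact he0H this
    · intro M hM
      obtain ⟨hM', hMe0⟩ := Finset.mem_filter.1 hM
      obtain ⟨hME, hMm⟩ := mem_matchings.1 hM'
      have hcard : M.card = (M.erase e0).card + 1 := by
        rw [Finset.card_erase_of_mem hMe0]
        have : 1 ≤ M.card := Finset.card_pos.2 ⟨e0, hMe0⟩
        omega
      have hR : M.erase e0 ∈ (H.removeVerts {u}).matchings := by
        refine mem_matchings.2 ⟨?_, hMm.subset (Finset.erase_subset _ _)⟩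
        intro f hf
        obtain ⟨hfne, hfM⟩ := Finset.mem_erase.1 hf
        have hfH : f ∈ H.edges := by
          have := hME hfM
          rw [hTe] at this
          rcases Finset.mem_insert.1 this with h | h
          · exact absurd h hfne
          · exact h
        refine Finset.mem_filter.2 ⟨hfH, ?_⟩
        have hdisj : Disjoint f e0 := (hMm e0 hMe0 f hfM hfne.symm).symm
        rw [Finset.disjoint_singleton_right]
        intro huf
        exact (Finset.disjoint_left.1 hdisj huf) (Finset.mem_insert_self u S)
      have hbR := matching_vertbound hr1 hwR huR hR
      have hrk : r * M.card = r * (M.erase e0).card + r := by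
        rw [hcard, Nat.mul_add, Nat.mul_one]
      have hexp : T.verts.card - r * M.card
          = (H.removeVerts {u}).verts.card - r * (M.erase e0).card := by omega
      rw [hexp, hcard, pow_add]
      ring
  rw [hsum2]
  ring

end FinHypergraph
namespace FinHypergraph

variable {α : Type*}

lemma IsPendantEdgesAttach.wf {r a : ℕ} {H T : FinHypergraph α} {u : α}
    (h : IsPendantEdgesAttach r a H u T) (hwf : H.WellFormed) : T.WellFormed := by
  obtain ⟨huv, F, hFcard, hFH, hFF, hTv, hTe⟩ := h
  intro e he
  rw [hTe] at he
  rw [hTv]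
  rcases Finset.mem_union.1 he with h | h
  · exact (hwf e h).trans Finset.subset_union_left
  · obtain ⟨i, _, rfl⟩ := Finset.mem_image.1 h
    intro y hy
    rcases Finset.mem_insert.1 hy with h' | h'
    · exact Finset.mem_union_left _ (h' ▸ huv)
    · exact Finset.mem_union_right _ (Finset.mem_biUnion.2 ⟨i, Finset.mem_univ i, h'⟩)

lemma IsPendantEdgesAttach.unif {r a : ℕ} {H T : FinHypergraph α} {u : α} (hr : 1 ≤ r)
    (h : IsPendantEdgesAttach r a H u T) (hu : H.Uniform r) : T.Uniform r := by
  obtain ⟨huv, F, hFcard, hFH, hFF, hTv, hTe⟩ := h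
  intro e he
  rw [hTe] at he
  rcases Finset.mem_union.1 he with h | h
  · exact hu e h
  · obtain ⟨i, _, rfl⟩ := Finset.mem_image.1 h
    rw [Finset.card_insert_of_notMem (Finset.disjoint_left.1 (hFH i) · huv), hFcard i]
    omega

lemma matchPoly_pendants {r : ℕ} (hr : 2 ≤ r) (a : ℕ) :
    ∀ (H T : FinHypergraph α) (u : α), H.WellFormed → H.Uniform r →
      IsPendantEdgesAttach r a H u T → ∀ x : ℝ,
      T.matchPoly r x = x ^ (a * (r - 1)) * H.matchPoly r x
        - (a : ℝ) * x ^ ((a - 1) * (r - 1)) * (H.removeVerts {u}).matchPoly r x := by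
  have hr1 : 1 ≤ r := by omega
  induction a with
  | zero =>
    intro H T u hwf hu h x
    obtain ⟨huv, F, hFcard, hFH, hFF, hTv, hTe⟩ := h
    have hv : T.verts = H.verts := by rw [hTv]; simp
    have he : T.edges = H.edges := by rw [hTe]; simp
    rw [matchPoly_congr hv he]
    simp
  | succ a ih =>
    intro H T u hwf hu h x
    obtain ⟨huv, F, hFcard, hFH, hFF, hTv, hTe⟩ := h
    set q := r - 1 with hq
    set S := F (Fin.last a) with hS
    set B : Finset α := Finset.univ.biUnion (fun i : Fin a => F i.castSucc) with hB
    set Ta : FinHypergraph α :=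
      ⟨H.verts ∪ B, H.edges ∪ Finset.univ.image (fun i : Fin a => insert u (F i.castSucc))⟩
      with hTa
    have hcastne : ∀ i : Fin a, i.castSucc ≠ Fin.last a := fun i =>
      Fin.ne_of_lt (Fin.castSucc_lt_last i)
    have hTaP : IsPendantEdgesAttach r a H u Ta := by
      refine ⟨huv, fun i => F i.castSucc, fun i => hFcard _, fun i => hFH _, ?_, rfl, rfl⟩
      intro i j hij
      exact hFF _ _ (by simpa [Fin.castSucc_inj] using hij)
    have hwTa : Ta.WellFormed := hTaP.wf hwf
    have huTa : Ta.Uniform r := hTaP.unif hr1 hu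
    have hUnionV : Finset.univ.biUnion F = B ∪ S := by
      ext v
      simp only [Finset.mem_biUnion, Finset.mem_union, Finset.mem_univ, true_and, hB, hS]
      constructor
      · rintro ⟨i, hi⟩
        rcases Fin.eq_castSucc_or_eq_last i with ⟨j, rfl⟩ | rfl
        · exact Or.inl ⟨j, hi⟩
        · exact Or.inr hi
      · rintro (⟨j, hj⟩ | hv)
        · exact ⟨j.castSucc, hj⟩
        · exact ⟨Fin.last a, hv⟩
    have hUnionE : Finset.univ.image (fun i : Fin (a+1) => insert u (F i))
        = insert (insert u S) (Finset.univ.image (fun i : Fin a => insert u (F i.castSucc))) := by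
      ext e
      simp only [Finset.mem_image, Finset.mem_insert, Finset.mem_univ, true_and, hS]
      constructor
      · rintro ⟨i, rfl⟩
        rcases Fin.eq_castSucc_or_eq_last i with ⟨j, rfl⟩ | rfl
        · exact Or.inr ⟨j, rfl⟩
        · exact Or.inl rfl
      · rintro (rfl | ⟨j, rfl⟩)
        · exact ⟨Fin.last a, rfl⟩
        · exact ⟨j.castSucc, rfl⟩
    have hTv' : T.verts = Ta.verts ∪ S := by
      rw [hTv, hUnionV, ← Finset.union_assoc]
    have hTe' : T.edges = insert (insert u S) Ta.edges := by
      rw [hTe, hUnionE, Finset.union_insert]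
    have hdSB : Disjoint S B := by
      rw [hB, Finset.disjoint_biUnion_right]
      exact fun i _ => (hFF _ _ (Ne.symm (hcastne i)))
    have hdS : Disjoint S Ta.verts := by
      show Disjoint S (H.verts ∪ B)
      rw [Finset.disjoint_union_right]
      exact ⟨hFH _, hdSB⟩
    have huvTa : u ∈ Ta.verts := Finset.mem_union_left _ huv
    have huB : u ∉ B := by
      rw [hB]
      simp only [Finset.mem_biUnion, Finset.mem_univ, true_and, not_exists]
      exact fun i hi => Finset.disjoint_left.1 (hFH i.castSucc) hi huv
    have step := matchPoly_pendant hr hwTa huTa huvTa (hFcard (Fin.last a)) hdS hTv' hTe' x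
    have hRv : (Ta.removeVerts {u}).verts = (H.removeVerts {u}).verts ∪ B := by
      show (H.verts ∪ B) \ {u} = (H.verts \ {u}) ∪ B
      ext v
      simp only [Finset.mem_sdiff, Finset.mem_union, Finset.mem_singleton]
      constructor
      · rintro ⟨h1 | h1, h2⟩
        · exact Or.inl ⟨h1, h2⟩
        · exact Or.inr h1
      · rintro (⟨h1, h2⟩ | h1)
        · exact ⟨Or.inl h1, h2⟩
        · exact ⟨Or.inr h1, fun hv => (hv ▸ huB) h1⟩
    have hRe : (Ta.removeVerts {u}).edges = (H.removeVerts {u}).edges := by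
      show (H.edges ∪ _).filter _ = H.edges.filter _
      rw [Finset.filter_union]
      have : (Finset.univ.image (fun i : Fin a => insert u (F i.castSucc))).filter
          (fun e => Disjoint e ({u} : Finset α)) = ∅ := by
        rw [Finset.filter_eq_empty_iff]
        intro e he
        obtain ⟨i, _, rfl⟩ := Finset.mem_image.1 he
        rw [Finset.disjoint_singleton_right]
        simp
      rw [this, Finset.union_empty]
    have hcardB : B.card = a * q := by
      rw [hB, Finset.card_biUnion (fun i _ j _ hij =>
        hFF _ _ (by simpa [Fin.castSucc_inj] using hij))]
      rw [Finset.sum_congr rfl (fun i _ => hFcard i.castSucc)]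
      simp [mul_comm]
    have hdRB : Disjoint (H.removeVerts {u}).verts B := by
      show Disjoint (H.verts \ {u}) B
      rw [hB, Finset.disjoint_biUnion_right]
      exact fun i _ => ((hFH i.castSucc).mono_right (Finset.sdiff_subset)).symm
    have hiso := matchPoly_add_isolated (H := H.removeVerts {u}) (T := Ta.removeVerts {u})
      hr1 (removeVerts_wf hwf _) (removeVerts_unif hu _) hdRB hRv hRe x
    rw [hcardB] at hiso
    have hTaPoly := ih H Ta u hwf hu hTaP x
    rw [step, hTaPoly, hiso]
    have e1 : x ^ q * x ^ (a * q) = x ^ ((a+1) * q) := by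
      rw [← pow_add]
      congr 1
      ring
    have key : (a : ℝ) * (x ^ q * x ^ ((a-1) * q)) = (a : ℝ) * x ^ (a * q) := by
      cases a with
      | zero => simp
      | succ n =>
        rw [← pow_add]
        congr 2
        simp only [Nat.add_sub_cancel]
        ring
    have hq' : (a + 1 - 1) * q = a * q := by simp
    rw [hq']
    push_cast
    linear_combination H.matchPoly r x * e1 - (H.removeVerts {u}).matchPoly r x * key

end FinHypergraph
namespace FinHypergraph

variable {α : Type*}

lemma pathHypergraph_wf (r m : ℕ) (w : ℕ → α) : (pathHypergraph r m w).WellFormed := by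
  intro e he
  obtain ⟨i, hi, rfl⟩ := Finset.mem_image.1 he
  apply Finset.image_subset_image
  intro z hz
  obtain ⟨h1, h2⟩ := Finset.mem_Icc.1 hz
  exact Finset.mem_Icc.2 ⟨Nat.zero_le _, h2.trans (Nat.mul_le_mul_right _ (Finset.mem_range.1 hi))⟩

lemma Icc_subset_Iic_mul {q i m : ℕ} (hi : i < m) :
    ↑(Finset.Icc (i * q) ((i+1) * q)) ⊆ Set.Iic (m * q) := by
  intro z hz
  simp only [Finset.coe_Icc, Set.mem_Icc] at hz
  exact Set.mem_Iic.2 (hz.2.trans (Nat.mul_le_mul_right _ hi))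

lemma pathHypergraph_unif {r m : ℕ} {w : ℕ → α} (hr : 2 ≤ r)
    (hw : Set.InjOn w (Set.Iic (m * (r - 1)))) : (pathHypergraph r m w).Uniform r := by
  intro e he
  obtain ⟨i, hi, rfl⟩ := Finset.mem_image.1 he
  rw [Finset.card_image_of_injOn (hw.mono (Icc_subset_Iic_mul (Finset.mem_range.1 hi))),
    Nat.card_Icc]
  have h2 : (i+1) * (r-1) = i * (r-1) + (r-1) := by ring
  omega

lemma pathHypergraph_card {r m : ℕ} {w : ℕ → α}
    (hw : Set.InjOn w (Set.Iic (m * (r - 1)))) :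
    (pathHypergraph r m w).verts.card = m * (r - 1) + 1 := by
  show ((Finset.Icc 0 (m * (r-1))).image w).card = _
  rw [Finset.card_image_of_injOn (hw.mono (by
    intro z hz
    simp only [Finset.coe_Icc, Set.mem_Icc] at hz
    exact Set.mem_Iic.2 hz.2)), Nat.card_Icc]
  omega

lemma IsLoosePath.verts_card {r m : ℕ} {P : FinHypergraph α} (hP : IsLoosePath r m P) :
    P.verts.card = m * (r - 1) + 1 := by
  obtain ⟨w, hw, hv, he⟩ := hP
  rw [hv]
  exact pathHypergraph_card hw

/-- The canonical index-level description of `k`-matchings of a loose path. -/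
noncomputable def pathIdx (r m k : ℕ) : Finset (Finset ℕ) :=
  (Finset.range m).powerset.filter (fun A => A.card = k ∧ ∀ i ∈ A, ∀ j ∈ A, i ≠ j →
    Disjoint (Finset.Icc (i * (r-1)) ((i+1) * (r-1))) (Finset.Icc (j * (r-1)) ((j+1) * (r-1))))

lemma matchCount_loosePath {r m : ℕ} {P : FinHypergraph α} (hr : 2 ≤ r)
    (hP : IsLoosePath r m P) (k : ℕ) : P.matchCount k = (pathIdx r m k).card := by
  classical
  obtain ⟨w, hw, hv, he⟩ := hP
  set q := r - 1 with hq
  have hq1 : 1 ≤ q := by omega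
  set f : ℕ → Finset α := fun i => (Finset.Icc (i * q) ((i+1) * q)).image w with hf
  have hfinj : ∀ i < m, ∀ j < m, f i = f j → i = j := by
    intro i hi j hj hij
    rw [hf] at hij
    simp only at hij
    rw [injOn_image_eq_iff hw (Icc_subset_Iic_mul hi) (Icc_subset_Iic_mul hj)] at hij
    have h1 : i * q ∈ Finset.Icc (j * q) ((j+1) * q) := by
      rw [← hij]
      exact Finset.mem_Icc.2 ⟨le_refl _, Nat.mul_le_mul_right _ (by omega)⟩
    have h2 : j * q ∈ Finset.Icc (i * q) ((i+1) * q) := by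
      rw [hij]
      exact Finset.mem_Icc.2 ⟨le_refl _, Nat.mul_le_mul_right _ (by omega)⟩
    have h3 := (Finset.mem_Icc.1 h1).1
    have h4 := (Finset.mem_Icc.1 h2).1
    exact Nat.eq_of_mul_eq_mul_right (by omega) (le_antisymm h4 h3)
  have hinjOn : ∀ {A : Finset ℕ}, A ⊆ Finset.range m → Set.InjOn f ↑A := by
    intro A hA i hi j hj hij
    exact hfinj i (Finset.mem_range.1 (hA hi)) j (Finset.mem_range.1 (hA hj)) hij
  have hdisj_iff : ∀ i, i < m → ∀ j, j < m →
      (Disjoint (f i) (f j) ↔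
        Disjoint (Finset.Icc (i * q) ((i+1) * q)) (Finset.Icc (j * q) ((j+1) * q))) :=
    fun i hi j hj => injOn_disjoint_image hw (Icc_subset_Iic_mul hi) (Icc_subset_Iic_mul hj)
  rw [matchCount, he]
  symm
  apply Finset.card_nbij' (i := fun A => A.image f)
    (j := fun M => (Finset.range m).filter (fun i => f i ∈ M))
  · -- forward: index sets to matchings
    intro A hA
    have hA' := Finset.mem_filter.1 hA
    have hAsub := Finset.mem_powerset.1 hA'.1
    have hAcard := hA'.2.1
    have hAdis := hA'.2.2
    refine Finset.mem_filter.2 ⟨Finset.mem_powerset.2 (Finset.image_subset_image hAsub), ?_, ?_⟩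
    · rw [Finset.card_image_of_injOn (hinjOn hAsub), hAcard]
    · intro e heA g hgA heg
      obtain ⟨i, hi, rfl⟩ := Finset.mem_image.1 heA
      obtain ⟨j, hj, rfl⟩ := Finset.mem_image.1 hgA
      have hij : i ≠ j := fun h => heg (h ▸ rfl)
      exact (hdisj_iff i (Finset.mem_range.1 (hAsub hi)) j (Finset.mem_range.1 (hAsub hj))).2
        (hAdis i hi j hj hij)
  · -- backward: matchings to index sets
    intro M hM
    have hM' := Finset.mem_filter.1 hM
    have hME := Finset.mem_powerset.1 hM'.1
    have hMcard := hM'.2.1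
    have hMm := hM'.2.2
    have hMeq : ((Finset.range m).filter (fun i => f i ∈ M)).image f = M := by
      apply Finset.Subset.antisymm
      · intro e heM
        obtain ⟨i, hi, rfl⟩ := Finset.mem_image.1 heM
        exact (Finset.mem_filter.1 hi).2
      · intro e heM
        obtain ⟨i, hi, rfl⟩ := Finset.mem_image.1 (hME heM)
        exact Finset.mem_image.2 ⟨i, Finset.mem_filter.2 ⟨hi, heM⟩, rfl⟩
    refine Finset.mem_filter.2 ⟨Finset.mem_powerset.2 (Finset.filter_subset _ _), ?_, ?_⟩
    · have hcc := Finset.card_image_of_injOn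
        (hinjOn (Finset.filter_subset (fun i => f i ∈ M) (Finset.range m)))
      rw [hMeq] at hcc
      beta_reduce
      omega
    · intro i hi j hj hij
      have hi' := Finset.mem_filter.1 hi
      have hj' := Finset.mem_filter.1 hj
      have hfij : f i ≠ f j := fun h =>
        hij (hfinj i (Finset.mem_range.1 hi'.1) j (Finset.mem_range.1 hj'.1) h)
      exact (hdisj_iff i (Finset.mem_range.1 hi'.1) j (Finset.mem_range.1 hj'.1)).1
        (hMm (f i) hi'.2 (f j) hj'.2 hfij)
  · -- left inverse
    intro A hA
    have hAsub := Finset.mem_powerset.1 (Finset.mem_filter.1 hA).1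
    ext i
    simp only [Finset.mem_filter, Finset.mem_range]
    constructor
    · rintro ⟨hi, hfi⟩
      obtain ⟨j, hj, hji⟩ := Finset.mem_image.1 hfi
      rwa [← hfinj j (Finset.mem_range.1 (hAsub hj)) i hi hji]
    · intro hi
      exact ⟨Finset.mem_range.1 (hAsub hi), Finset.mem_image_of_mem f hi⟩
  · -- right inverse
    intro M hM
    have hME := Finset.mem_powerset.1 (Finset.mem_filter.1 hM).1
    apply Finset.Subset.antisymm
    · intro e heM
      obtain ⟨i, hi, rfl⟩ := Finset.mem_image.1 heM
      exact (Finset.mem_filter.1 hi).2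
    · intro e heM
      obtain ⟨i, hi, rfl⟩ := Finset.mem_image.1 (hME heM)
      exact Finset.mem_image.2 ⟨i, Finset.mem_filter.2 ⟨hi, heM⟩, rfl⟩

lemma matchPoly_loosePath_congr {β : Type*} {r m : ℕ} {P : FinHypergraph α}
    {P' : FinHypergraph β} (hr : 2 ≤ r) (h : IsLoosePath r m P) (h' : IsLoosePath r m P')
    (x : ℝ) : P.matchPoly r x = P'.matchPoly r x := by
  rw [matchPoly, matchPoly, h.verts_card, h'.verts_card]
  apply Finset.sum_congr rfl
  intro k _
  rw [matchCount_loosePath hr h, matchCount_loosePath hr h']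

end FinHypergraph
namespace FinHypergraph

variable {α : Type*}

lemma mul_le_mul_right_iff' {q i t : ℕ} (hq : 1 ≤ q) : i * q ≤ t * q ↔ i ≤ t :=
  ⟨fun h => Nat.le_of_mul_le_mul_right h (by omega), fun h => Nat.mul_le_mul_right _ h⟩

lemma joint_mem_edge_iff {r m t i : ℕ} {w : ℕ → α} (hr : 2 ≤ r)
    (hw : Set.InjOn w (Set.Iic (m * (r-1)))) (htm : t ≤ m) (hi : i < m) :
    w (t * (r-1)) ∈ (Finset.Icc (i * (r-1)) ((i+1) * (r-1))).image w ↔ (i ≤ t ∧ t ≤ i + 1) := by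
  have hq1 : 1 ≤ r - 1 := by omega
  rw [injOn_image_mem hw (Icc_subset_Iic_mul hi)
    (Set.mem_Iic.2 (Nat.mul_le_mul_right _ htm))]
  rw [Finset.mem_Icc, mul_le_mul_right_iff' hq1, mul_le_mul_right_iff' hq1]

lemma shifted_edge_eq {r : ℕ} (w : ℕ → α) (j s : ℕ) :
    (Finset.Icc (j * (r-1)) ((j+1) * (r-1))).image (fun z => w (z + s * (r-1)))
      = (Finset.Icc ((j + s) * (r-1)) ((j + s + 1) * (r-1))).image w := by
  rw [show (fun z => w (z + s * (r-1))) = w ∘ (fun z => z + s * (r-1)) from rfl,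
    ← Finset.image_image, Finset.image_add_right_Icc]
  congr 2 <;> ring

lemma loosePathEdges_shifted (r p s : ℕ) (w : ℕ → α) :
    loosePathEdges r p (fun j => w (j + s * (r-1)))
      = (Finset.range p).image (fun j =>
          (Finset.Icc ((j + s) * (r-1)) ((j + s + 1) * (r-1))).image w) := by
  rw [loosePathEdges]
  apply Finset.image_congr
  intro j _
  exact shifted_edge_eq w j s

lemma shifted_path_verts (r p s : ℕ) (w : ℕ → α) :
    (pathHypergraph r p (fun j => w (j + s * (r-1)))).verts
      = (Finset.Icc (s * (r-1)) (p * (r-1) + s * (r-1))).image w := by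
  show (Finset.Icc 0 (p * (r-1))).image (fun j => w (j + s * (r-1))) = _
  rw [show (fun z => w (z + s * (r-1))) = w ∘ (fun z => z + s * (r-1)) from rfl,
    ← Finset.image_image, Finset.image_add_right_Icc, Nat.zero_add]

lemma path_edges_filter_single {r m t : ℕ} {w : ℕ → α} (hr : 2 ≤ r)
    (hw : Set.InjOn w (Set.Iic (m * (r-1)))) (ht1 : 1 ≤ t) (htm : t ≤ m) :
    (loosePathEdges r m w).filter (fun e => Disjoint e ({w (t * (r-1))} : Finset α))
      = loosePathEdges r (t-1) w
        ∪ loosePathEdges r (m-t-1) (fun j => w (j + (t+1) * (r-1))) := by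
  classical
  rw [loosePathEdges, Finset.filter_image]
  rw [Finset.filter_congr (q := fun i => i + 1 < t ∨ t < i) (fun i hi => by
    rw [Finset.disjoint_singleton_right,
      joint_mem_edge_iff hr hw htm (Finset.mem_range.1 hi)]
    constructor
    · intro h
      omega
    · intro h
      omega)]
  have hidx : (Finset.range m).filter (fun i => i + 1 < t ∨ t < i)
      = Finset.range (t-1) ∪ (Finset.range (m-t-1)).image (fun j => j + (t+1)) := by
    ext i
    simp only [Finset.mem_filter, Finset.mem_range, Finset.mem_union, Finset.mem_image]
    constructor
    · rintro ⟨h1, h2 | h2⟩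
      · omega
      · exact Or.inr ⟨i - (t+1), by omega, by omega⟩
    · rintro (h | ⟨j, hj, rfl⟩) <;> omega
  rw [hidx, Finset.image_union, loosePathEdges, loosePathEdges_shifted, Finset.image_image]
  rfl

lemma path_edges_filter_pair {r m t : ℕ} {w : ℕ → α} (hr : 2 ≤ r)
    (hw : Set.InjOn w (Set.Iic (m * (r-1)))) (ht1 : 1 ≤ t) (htm : t + 1 ≤ m) :
    (loosePathEdges r m w).filter
        (fun e => Disjoint e ({w (t * (r-1)), w ((t+1) * (r-1))} : Finset α))
      = loosePathEdges r (t-1) w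
        ∪ loosePathEdges r (m-t-2) (fun j => w (j + (t+2) * (r-1))) := by
  classical
  rw [loosePathEdges, Finset.filter_image]
  rw [Finset.filter_congr (q := fun i => i + 1 < t ∨ t + 1 < i) (fun i hi => by
    rw [Finset.disjoint_insert_right, Finset.disjoint_singleton_right,
      joint_mem_edge_iff hr hw (by omega : t ≤ m) (Finset.mem_range.1 hi),
      joint_mem_edge_iff hr hw (by omega : t + 1 ≤ m) (Finset.mem_range.1 hi)]
    constructor
    · intro h
      omega
    · intro h
      omega)]
  have hidx : (Finset.range m).filter (fun i => i + 1 < t ∨ t + 1 < i)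
      = Finset.range (t-1) ∪ (Finset.range (m-t-2)).image (fun j => j + (t+2)) := by
    ext i
    simp only [Finset.mem_filter, Finset.mem_range, Finset.mem_union, Finset.mem_image]
    constructor
    · rintro ⟨h1, h2 | h2⟩
      · omega
      · exact Or.inr ⟨i - (t+2), by omega, by omega⟩
    · rintro (h | ⟨j, hj, rfl⟩) <;> omega
  rw [hidx, Finset.image_union, loosePathEdges, loosePathEdges_shifted, Finset.image_image]
  rfl

end FinHypergraph
namespace FinHypergraph

variable {α : Type*}

lemma coe_subset_Iic_of_le {S : Finset ℕ} {c : ℕ} (h : ∀ z ∈ S, z ≤ c) :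
    ↑S ⊆ Set.Iic c := fun z hz => h z hz

lemma shifted_injOn {w : ℕ → α} {m t q : ℕ} (hw : Set.InjOn w (Set.Iic (m * q)))
    (h : (m - t - 1) * q + (t+1) * q = m * q) :
    Set.InjOn (fun j => w (j + (t+1) * q)) (Set.Iic ((m - t - 1) * q)) := by
  intro a ha b hb hab
  have ha' : a + (t+1) * q ≤ m * q := by
    have := Set.mem_Iic.1 ha
    omega
  have hb' : b + (t+1) * q ≤ m * q := by
    have := Set.mem_Iic.1 hb
    omega
  have := hw (Set.mem_Iic.2 ha') (Set.mem_Iic.2 hb') hab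
  omega

lemma matchPoly_path_remove_end {r m : ℕ} {w : ℕ → α} (hr : 3 ≤ r)
    (hw : Set.InjOn w (Set.Iic (m * (r-1)))) (hm : 1 ≤ m) (x : ℝ) :
    ((pathHypergraph r m w).removeVerts {w (m * (r-1))}).matchPoly r x
      = x ^ (r-2) * (pathHypergraph r (m-1) w).matchPoly r x := by
  classical
  set q := r - 1 with hq
  have hq2 : 2 ≤ q := by omega
  have h0 : (m - 1) * q + q = m * q := by
    have ht : m - 1 + 1 = m := by omega
    calc (m-1)*q + q = ((m-1)+1)*q := by ring
      _ = m*q := by rw [ht]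
  have hw' : Set.InjOn w (Set.Iic ((m-1) * q)) := hw.mono (Set.Iic_subset_Iic.2 (by omega))
  set I : Finset α := (Finset.Icc ((m-1)*q + 1) (m*q - 1)).image w with hI
  have hIcard : I.card = r - 2 := by
    rw [hI, Finset.card_image_of_injOn (hw.mono (coe_subset_Iic_of_le (fun z hz => by
      have := Finset.mem_Icc.1 hz
      omega))), Nat.card_Icc]
    omega
  have hTv : ((pathHypergraph r m w).removeVerts {w (m * q)}).verts
      = (pathHypergraph r (m-1) w).verts ∪ I := by
    show ((Finset.Icc 0 (m*q)).image w) \ {w (m*q)} = (Finset.Icc 0 ((m-1)*q)).image w ∪ I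
    rw [hI, ← Finset.image_singleton w (m*q), ← Finset.image_union,
      ← injOn_image_sdiff hw (coe_subset_Iic_of_le (fun z hz => (Finset.mem_Icc.1 hz).2))
        (coe_subset_Iic_of_le (fun z hz => by simp at hz; omega))]
    congr 1
    ext z
    simp only [Finset.mem_sdiff, Finset.mem_Icc, Finset.mem_singleton, Finset.mem_union]
    omega
  have hTe : ((pathHypergraph r m w).removeVerts {w (m * q)}).edges
      = (pathHypergraph r (m-1) w).edges := by
    show (loosePathEdges r m w).filter _ = loosePathEdges r (m-1) w
    rw [path_edges_filter_single (by omega) hw hm (le_refl m)]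
    have : m - m - 1 = 0 := by omega
    rw [this]
    show _ ∪ (Finset.range 0).image _ = _
    simp
  have hdisj : Disjoint (pathHypergraph r (m-1) w).verts I := by
    show Disjoint ((Finset.Icc 0 ((m-1)*q)).image w) I
    rw [hI, injOn_disjoint_image hw
      (coe_subset_Iic_of_le (fun z hz => by have := Finset.mem_Icc.1 hz; omega))
      (coe_subset_Iic_of_le (fun z hz => by have := Finset.mem_Icc.1 hz; omega))]
    rw [Finset.disjoint_left]
    intro z hz hz'
    have := Finset.mem_Icc.1 hz
    have := Finset.mem_Icc.1 hz'
    omega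
  rw [matchPoly_add_isolated (by omega) (pathHypergraph_wf r (m-1) w)
    (pathHypergraph_unif (by omega) hw') hdisj hTv hTe x, hIcard]

lemma matchPoly_path_remove_single {r m t : ℕ} {w : ℕ → α} (hr : 3 ≤ r)
    (hw : Set.InjOn w (Set.Iic (m * (r-1)))) (ht1 : 1 ≤ t) (htm : t + 1 ≤ m) (x : ℝ) :
    ((pathHypergraph r m w).removeVerts {w (t * (r-1))}).matchPoly r x
      = x ^ (2*r - 4) * ((pathHypergraph r (t-1) w).matchPoly r x
          * (pathHypergraph r (m-t-1) (fun j => w (j + (t+1) * (r-1)))).matchPoly r x) := by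
  classical
  set q := r - 1 with hq
  have hq2 : 2 ≤ q := by omega
  have h0 : (t - 1) * q + q = t * q := by
    have ht : t - 1 + 1 = t := by omega
    calc (t-1)*q + q = ((t-1)+1)*q := by ring
      _ = t*q := by rw [ht]
  have h2 : t*q + q = (t+1)*q := by ring
  have h4 : (m - t - 1) * q + (t+1) * q = m * q := by
    have ht : (m - t - 1) + (t+1) = m := by omega
    calc (m-t-1)*q + (t+1)*q = ((m-t-1)+(t+1))*q := by ring
      _ = m*q := by rw [ht]
  have hw1 : Set.InjOn w (Set.Iic ((t-1) * q)) := hw.mono (Set.Iic_subset_Iic.2 (by omega))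
  have hw2 : Set.InjOn (fun j => w (j + (t+1) * q)) (Set.Iic ((m - t - 1) * q)) :=
    shifted_injOn hw h4
  set A := pathHypergraph r (t-1) w with hA
  set B := pathHypergraph r (m-t-1) (fun j => w (j + (t+1) * q)) with hB
  set Iset : Finset ℕ := (Finset.Icc ((t-1)*q + 1) ((t+1)*q - 1)).erase (t*q) with hIs
  set I : Finset α := Iset.image w with hI
  have hIsub : ↑Iset ⊆ Set.Iic (m * q) := coe_subset_Iic_of_le (fun z hz => by
    have := Finset.mem_Icc.1 (Finset.mem_of_mem_erase hz)
    omega)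
  have hAsub : ↑(Finset.Icc 0 ((t-1)*q)) ⊆ Set.Iic (m*q) :=
    coe_subset_Iic_of_le (fun z hz => by have := Finset.mem_Icc.1 hz; omega)
  have hBsub : ↑(Finset.Icc ((t+1)*q) (m*q)) ⊆ Set.Iic (m*q) :=
    coe_subset_Iic_of_le (fun z hz => by have := Finset.mem_Icc.1 hz; omega)
  have hIcard : I.card = 2*r - 4 := by
    rw [hI, Finset.card_image_of_injOn (hw.mono hIsub), hIs,
      Finset.card_erase_of_mem (Finset.mem_Icc.2 (by omega)), Nat.card_Icc]
    omega
  have hBv : B.verts = (Finset.Icc ((t+1)*q) (m*q)).image w := by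
    rw [hB, shifted_path_verts, h4]
  have hAv : A.verts = (Finset.Icc 0 ((t-1)*q)).image w := rfl
  have hdAB : Disjoint A.verts B.verts := by
    rw [hAv, hBv, injOn_disjoint_image hw hAsub hBsub, Finset.disjoint_left]
    intro z hz hz'
    have := Finset.mem_Icc.1 hz
    have := Finset.mem_Icc.1 hz'
    omega
  have hdI : Disjoint (A.verts ∪ B.verts) I := by
    rw [hAv, hBv, hI, ← Finset.image_union,
      injOn_disjoint_image hw (by
        rw [Finset.coe_union]
        exact Set.union_subset hAsub hBsub) hIsub, Finset.disjoint_left]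
    intro z hz hz'
    rw [Finset.mem_union] at hz
    have hz2 := Finset.mem_Icc.1 (Finset.mem_of_mem_erase hz')
    have hz3 := (Finset.mem_erase.1 hz').1
    rcases hz with h | h
    · have := Finset.mem_Icc.1 h
      omega
    · have := Finset.mem_Icc.1 h
      omega
  have hTv : ((pathHypergraph r m w).removeVerts {w (t * q)}).verts
      = (A.verts ∪ I) ∪ B.verts := by
    show ((Finset.Icc 0 (m*q)).image w) \ {w (t*q)} = _
    rw [hAv, hBv, hI, ← Finset.image_singleton w (t*q), ← Finset.image_union,
      ← Finset.image_union,
      ← injOn_image_sdiff hw (coe_subset_Iic_of_le (fun z hz => (Finset.mem_Icc.1 hz).2))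
        (coe_subset_Iic_of_le (fun z hz => by simp at hz; omega))]
    congr 1
    ext z
    simp only [Finset.mem_sdiff, Finset.mem_Icc, Finset.mem_singleton, Finset.mem_union,
      Finset.mem_erase, hIs]
    omega
  have hTe : ((pathHypergraph r m w).removeVerts {w (t * q)}).edges
      = A.edges ∪ B.edges :=
    path_edges_filter_single (by omega) hw ht1 (by omega)
  rw [matchPoly_split (by omega) (pathHypergraph_wf r (t-1) w)
    (pathHypergraph_wf r (m-t-1) _) (pathHypergraph_unif (by omega) hw1)
    (pathHypergraph_unif (by omega) hw2) hdAB hdI hTv hTe x, hIcard]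

lemma matchPoly_path_remove_pair {r m t : ℕ} {w : ℕ → α} (hr : 3 ≤ r)
    (hw : Set.InjOn w (Set.Iic (m * (r-1)))) (ht1 : 1 ≤ t) (htm : t + 2 ≤ m) (x : ℝ) :
    ((pathHypergraph r m w).removeVerts {w (t * (r-1)), w ((t+1) * (r-1))}).matchPoly r x
      = x ^ (3*r - 6) * ((pathHypergraph r (t-1) w).matchPoly r x
          * (pathHypergraph r (m-t-2) (fun j => w (j + (t+2) * (r-1)))).matchPoly r x) := by
  classical
  set q := r - 1 with hq
  have hq2 : 2 ≤ q := by omega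
  have h0 : (t - 1) * q + q = t * q := by
    have ht : t - 1 + 1 = t := by omega
    calc (t-1)*q + q = ((t-1)+1)*q := by ring
      _ = t*q := by rw [ht]
  have h2 : t*q + q = (t+1)*q := by ring
  have h3 : (t+1)*q + q = (t+2)*q := by ring
  have h4 : (m - t - 2) * q + (t+2) * q = m * q := by
    have ht : (m - t - 2) + (t+2) = m := by omega
    calc (m-t-2)*q + (t+2)*q = ((m-t-2)+(t+2))*q := by ring
      _ = m*q := by rw [ht]
  have hw1 : Set.InjOn w (Set.Iic ((t-1) * q)) := hw.mono (Set.Iic_subset_Iic.2 (by omega))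
  have hw2 : Set.InjOn (fun j => w (j + (t+2) * q)) (Set.Iic ((m - t - 2) * q)) := by
    intro a ha b hb hab
    have ha' : a + (t+2) * q ≤ m * q := by
      have := Set.mem_Iic.1 ha
      omega
    have hb' : b + (t+2) * q ≤ m * q := by
      have := Set.mem_Iic.1 hb
      omega
    have := hw (Set.mem_Iic.2 ha') (Set.mem_Iic.2 hb') hab
    omega
  set A := pathHypergraph r (t-1) w with hA
  set B := pathHypergraph r (m-t-2) (fun j => w (j + (t+2) * q)) with hB
  set Iset : Finset ℕ :=
    ((Finset.Icc ((t-1)*q + 1) ((t+2)*q - 1)).erase (t*q)).erase ((t+1)*q) with hIs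
  set I : Finset α := Iset.image w with hI
  have hIsub : ↑Iset ⊆ Set.Iic (m * q) := coe_subset_Iic_of_le (fun z hz => by
    have := Finset.mem_Icc.1 (Finset.mem_of_mem_erase (Finset.mem_of_mem_erase hz))
    omega)
  have hAsub : ↑(Finset.Icc 0 ((t-1)*q)) ⊆ Set.Iic (m*q) :=
    coe_subset_Iic_of_le (fun z hz => by have := Finset.mem_Icc.1 hz; omega)
  have hBsub : ↑(Finset.Icc ((t+2)*q) (m*q)) ⊆ Set.Iic (m*q) :=
    coe_subset_Iic_of_le (fun z hz => by have := Finset.mem_Icc.1 hz; omega)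
  have hIcard : I.card = 3*r - 6 := by
    rw [hI, Finset.card_image_of_injOn (hw.mono hIsub), hIs,
      Finset.card_erase_of_mem (Finset.mem_erase.2 ⟨by omega, Finset.mem_Icc.2 (by omega)⟩),
      Finset.card_erase_of_mem (Finset.mem_Icc.2 (by omega)), Nat.card_Icc]
    omega
  have hBv : B.verts = (Finset.Icc ((t+2)*q) (m*q)).image w := by
    rw [hB, shifted_path_verts, h4]
  have hAv : A.verts = (Finset.Icc 0 ((t-1)*q)).image w := rfl
  have hdAB : Disjoint A.verts B.verts := by
    rw [hAv, hBv, injOn_disjoint_image hw hAsub hBsub, Finset.disjoint_left]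
    intro z hz hz'
    have := Finset.mem_Icc.1 hz
    have := Finset.mem_Icc.1 hz'
    omega
  have hdI : Disjoint (A.verts ∪ B.verts) I := by
    rw [hAv, hBv, hI, ← Finset.image_union,
      injOn_disjoint_image hw (by
        rw [Finset.coe_union]
        exact Set.union_subset hAsub hBsub) hIsub, Finset.disjoint_left]
    intro z hz hz'
    rw [Finset.mem_union] at hz
    have hz2 := Finset.mem_Icc.1 (Finset.mem_of_mem_erase (Finset.mem_of_mem_erase hz'))
    rcases hz with h | h
    · have := Finset.mem_Icc.1 h
      omega
    · have := Finset.mem_Icc.1 h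
      omega
  have hTv : ((pathHypergraph r m w).removeVerts {w (t * q), w ((t+1) * q)}).verts
      = (A.verts ∪ I) ∪ B.verts := by
    show ((Finset.Icc 0 (m*q)).image w) \ {w (t*q), w ((t+1)*q)} = _
    have himg : ({w (t*q), w ((t+1)*q)} : Finset α) = ({t*q, (t+1)*q} : Finset ℕ).image w := by
      rw [Finset.image_insert, Finset.image_singleton]
    rw [hAv, hBv, hI, himg, ← Finset.image_union, ← Finset.image_union,
      ← injOn_image_sdiff hw (coe_subset_Iic_of_le (fun z hz => (Finset.mem_Icc.1 hz).2))
        (coe_subset_Iic_of_le (fun z hz => by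
          simp only [Finset.mem_insert, Finset.mem_singleton] at hz
          rcases hz with rfl | rfl <;> omega))]
    congr 1
    ext z
    simp only [Finset.mem_sdiff, Finset.mem_Icc, Finset.mem_singleton, Finset.mem_insert,
      Finset.mem_union, Finset.mem_erase, hIs]
    omega
  have hTe : ((pathHypergraph r m w).removeVerts {w (t * q), w ((t+1) * q)}).edges
      = A.edges ∪ B.edges :=
    path_edges_filter_pair (by omega) hw ht1 (by omega)
  rw [matchPoly_split (by omega) (pathHypergraph_wf r (t-1) w)
    (pathHypergraph_wf r (m-t-2) _) (pathHypergraph_unif (by omega) hw1)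
    (pathHypergraph_unif (by omega) hw2) hdAB hdI hTv hTe x, hIcard]

end FinHypergraph
namespace FinHypergraph

variable {α : Type*}

lemma matchPoly_path_rec {r k : ℕ} (hr : 3 ≤ r) (hk : 2 ≤ k) (x : ℝ) :
    (pathHypergraph r k (id : ℕ → ℕ)).matchPoly r x
      = x ^ (r-1) * (pathHypergraph r (k-1) (id : ℕ → ℕ)).matchPoly r x
        - x ^ (r-2) * (pathHypergraph r (k-2) (id : ℕ → ℕ)).matchPoly r x := by
  classical
  set q := r - 1 with hq
  have hq2 : 2 ≤ q := by omega
  have h0 : (k - 1) * q + q = k * q := by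
    have ht : k - 1 + 1 = k := by omega
    calc (k-1)*q + q = ((k-1)+1)*q := by ring
      _ = k*q := by rw [ht]
  have hwid : ∀ p : ℕ, Set.InjOn (id : ℕ → ℕ) (Set.Iic p) := fun p => Function.injective_id.injOn
  set u : ℕ := (k-1) * q with hu
  set S : Finset ℕ := Finset.Icc ((k-1)*q + 1) (k*q) with hS
  have huv : u ∈ (pathHypergraph r (k-1) (id : ℕ → ℕ)).verts := by
    simp only [pathHypergraph, Finset.image_id, Finset.mem_Icc, ← hq]
    omega
  have hScard : S.card = r - 1 := by
    rw [hS, Nat.card_Icc]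
    omega
  have hdS : Disjoint S (pathHypergraph r (k-1) (id : ℕ → ℕ)).verts := by
    simp only [pathHypergraph, Finset.image_id, ← hq]
    rw [Finset.disjoint_left]
    intro z hz hz'
    have := Finset.mem_Icc.1 (hS ▸ hz)
    have := Finset.mem_Icc.1 hz'
    omega
  have hrec := matchPoly_pendant (H := pathHypergraph r (k-1) (id : ℕ → ℕ))
    (T := pathHypergraph r k (id : ℕ → ℕ)) (by omega)
    (pathHypergraph_wf r (k-1) id) (pathHypergraph_unif (by omega) (hwid _)) huv
    hScard hdS (by
      simp only [pathHypergraph, Finset.image_id, ← hq, hS]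
      ext z
      simp only [Finset.mem_Icc, Finset.mem_union]
      omega) (by
      simp only [pathHypergraph, loosePathEdges, Finset.image_id, ← hq]
      ext e
      simp only [Finset.mem_image, Finset.mem_insert, Finset.mem_range]
      constructor
      · rintro ⟨i, hi, rfl⟩
        rcases eq_or_lt_of_le (by omega : i ≤ k - 1) with h | h
        · subst h
          left
          rw [show k - 1 + 1 = k from by omega]
          ext z
          simp only [Finset.mem_Icc, Finset.mem_insert, hu, hS]
          omega
        · exact Or.inr ⟨i, by omega, rfl⟩
      · rintro (rfl | ⟨i, hi, rfl⟩)
        · refine ⟨k-1, by omega, ?_⟩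
          rw [show k - 1 + 1 = k from by omega]
          ext z
          simp only [Finset.mem_Icc, Finset.mem_insert, hu, hS]
          omega
        · exact ⟨i, by omega, rfl⟩) x
  rw [hrec]
  have hend : ((pathHypergraph r (k-1) (id : ℕ → ℕ)).removeVerts {u}).matchPoly r x
      = x ^ (r-2) * (pathHypergraph r (k-1-1) (id : ℕ → ℕ)).matchPoly r x := by
    have := matchPoly_path_remove_end (r := r) (m := k-1) (w := (id : ℕ → ℕ)) hr
      (hwid _) (by omega) x
    exact this
  rw [hend, show k - 1 - 1 = k - 2 by omega]

lemma pathHypergraph_isLoosePath {r p : ℕ} {w : ℕ → α}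
    (hw : Set.InjOn w (Set.Iic (p * (r-1)))) : IsLoosePath r p (pathHypergraph r p w) :=
  ⟨w, hw, rfl, rfl⟩

/-- Abstract three-term recurrence for matching polynomials of loose paths. -/
lemma matchPoly_loosePath_rec {r k : ℕ} {P P1 P2 : FinHypergraph α} (hr : 3 ≤ r) (hk : 2 ≤ k)
    (hP : IsLoosePath r k P) (hP1 : IsLoosePath r (k-1) P1) (hP2 : IsLoosePath r (k-2) P2)
    (x : ℝ) :
    P.matchPoly r x = x ^ (r-1) * P1.matchPoly r x - x ^ (r-2) * P2.matchPoly r x := by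
  have hwid : ∀ p : ℕ, Set.InjOn (id : ℕ → ℕ) (Set.Iic p) := fun p => Function.injective_id.injOn
  rw [matchPoly_loosePath_congr (by omega) hP (pathHypergraph_isLoosePath (hwid _)),
    matchPoly_loosePath_congr (by omega) hP1 (pathHypergraph_isLoosePath (hwid _)),
    matchPoly_loosePath_congr (by omega) hP2 (pathHypergraph_isLoosePath (hwid _))]
  exact matchPoly_path_rec hr hk x

end FinHypergraph
open FinHypergraph

/-- For `r ≥ 3`, `d ≥ 3`, `m ≥ d + 2`, `a = m − d − 1` and
`b = ⌈d/2⌉`, the supertree `T''` obtained from the loose path `P_d^r` by attaching `a`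
pendant edges at the joint vertex `v_b` and one pendant edge at the joint vertex
`v_{b+1}` satisfies
`φ(T'', x) = x^((a+1)(r−1))·φ(P_d^r, x)
  − x^((a+2)(r−1)−2)·φ(P_{b−1}^r, x)·φ(P_{d−b−1}^r, x)
  − a·x^((a+1)(r−1)−2)·φ(P_{b−2}^r, x)·φ(P_{d−b+1}^r, x)`. -/
theorem matchPoly_doublestar_on_path {α : Type*} (r d m : ℕ)
    (hr : 3 ≤ r) (hd : 3 ≤ d) (hm : d + 2 ≤ m)
    (w : ℕ → α) (hw : Set.InjOn w (Set.Iic (d * (r - 1))))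
    (T1 T'' : FinHypergraph α)
    (hT1 : IsPendantEdgesAttach r (m - d - 1) (pathHypergraph r d w)
      (w (((d + 1) / 2 - 1) * (r - 1))) T1)
    (hT'' : IsPendantEdgesAttach r 1 T1 (w (((d + 1) / 2) * (r - 1))) T'')
    (Q1 Q2 Q3 Q4 : FinHypergraph α)
    (hQ1 : IsLoosePath r ((d + 1) / 2 - 1) Q1)
    (hQ2 : IsLoosePath r (d - (d + 1) / 2 - 1) Q2)
    (hQ3 : IsLoosePath r ((d + 1) / 2 - 2) Q3)
    (hQ4 : IsLoosePath r (d - (d + 1) / 2 + 1) Q4) :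
    ∀ x : ℝ, T''.matchPoly r x
      = x ^ ((m - d) * (r - 1)) * (pathHypergraph r d w).matchPoly r x
        - x ^ ((m - d + 1) * (r - 1) - 2) * Q1.matchPoly r x * Q2.matchPoly r x
        - ((m - d - 1 : ℕ) : ℝ) * x ^ ((m - d) * (r - 1) - 2) *
            Q3.matchPoly r x * Q4.matchPoly r x := by
  intro x
  have hr1 : 1 ≤ r := by omega
  have hb2 : 2 ≤ (d + 1) / 2 := by omega
  have hbd : (d + 1) / 2 + 1 ≤ d := by omega
  have ha1 : 1 ≤ m - d - 1 := by omega
  have hwP : (pathHypergraph r d w).WellFormed := pathHypergraph_wf r d w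
  have huP : (pathHypergraph r d w).Uniform r := pathHypergraph_unif (by omega) hw
  have hwT1 : T1.WellFormed := hT1.wf hwP
  have huT1 : T1.Uniform r := hT1.unif hr1 huP
  -- step 1 : peel off the single pendant edge at u' = v_{b+1}
  have s1 := matchPoly_pendants (α := α) (by omega : 2 ≤ r) 1 T1 T''
    (w (((d + 1) / 2) * (r - 1))) hwT1 huT1 hT'' x
  simp only [Nat.cast_one, one_mul, Nat.sub_self, zero_mul, pow_zero] at s1
  -- step 2 : peel off the a pendant edges at u = v_b from T1
  have s2 := matchPoly_pendants (α := α) (by omega : 2 ≤ r) (m - d - 1)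
    (pathHypergraph r d w) T1 (w (((d + 1) / 2 - 1) * (r - 1))) hwP huP hT1 x
  -- step 3 : T1 - u' is an a-pendant attach on P - u'
  obtain ⟨huv, F, hFcard, hFH, hFF, hTv, hTe⟩ := hT1
  have hu'P : w ((d + 1) / 2 * (r - 1)) ∈ (pathHypergraph r d w).verts :=
    Finset.mem_image_of_mem w (Finset.mem_Icc.2 ⟨Nat.zero_le _,
      Nat.mul_le_mul_right _ (by omega)⟩)
  have hne : w (((d + 1) / 2 - 1) * (r - 1)) ≠ w ((d + 1) / 2 * (r - 1)) := by
    intro h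
    have h1 : ((d + 1) / 2 - 1) * (r - 1) ≤ d * (r - 1) := Nat.mul_le_mul_right _ (by omega)
    have h2 : (d + 1) / 2 * (r - 1) ≤ d * (r - 1) := Nat.mul_le_mul_right _ (by omega)
    have h3 := hw (Set.mem_Iic.2 h1) (Set.mem_Iic.2 h2) h
    have e : ((d + 1) / 2 - 1 + 1) * (r - 1) = ((d + 1) / 2 - 1) * (r - 1) + (r - 1) := by ring
    rw [show (d + 1) / 2 - 1 + 1 = (d + 1) / 2 from by omega] at e
    omega
  have hu'F : ∀ i, w ((d + 1) / 2 * (r - 1)) ∉ F i :=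
    fun i h => Finset.disjoint_left.1 (hFH i) h hu'P
  have hattach : IsPendantEdgesAttach r (m - d - 1)
      ((pathHypergraph r d w).removeVerts {w ((d + 1) / 2 * (r - 1))})
      (w (((d + 1) / 2 - 1) * (r - 1)))
      (T1.removeVerts {w ((d + 1) / 2 * (r - 1))}) := by
    refine ⟨Finset.mem_sdiff.2 ⟨huv, by
        rw [Finset.mem_singleton]
        exact hne⟩, F, hFcard,
      fun i => (hFH i).mono_right Finset.sdiff_subset, hFF, ?_, ?_⟩
    · show T1.verts \ {w ((d + 1) / 2 * (r - 1))}
          = ((pathHypergraph r d w).verts \ {w ((d + 1) / 2 * (r - 1))})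
            ∪ Finset.univ.biUnion F
      rw [hTv]
      ext v
      simp only [Finset.mem_sdiff, Finset.mem_union, Finset.mem_singleton]
      constructor
      · rintro ⟨h | h, h2⟩
        · exact Or.inl ⟨h, h2⟩
        · exact Or.inr h
      · rintro (⟨h1, h2⟩ | h)
        · exact ⟨Or.inl h1, h2⟩
        · refine ⟨Or.inr h, ?_⟩
          obtain ⟨i, _, hi⟩ := Finset.mem_biUnion.1 h
          exact fun hv => hu'F i (hv ▸ hi)
    · show T1.edges.filter (fun e => Disjoint e {w ((d + 1) / 2 * (r - 1))})
          = (pathHypergraph r d w).edges.filter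
              (fun e => Disjoint e {w ((d + 1) / 2 * (r - 1))})
            ∪ Finset.image (fun i => insert (w (((d + 1) / 2 - 1) * (r - 1))) (F i))
                Finset.univ
      rw [hTe, Finset.filter_union]
      congr 1
      apply Finset.filter_true_of_mem
      intro e he
      obtain ⟨i, _, rfl⟩ := Finset.mem_image.1 he
      rw [Finset.disjoint_singleton_right, Finset.mem_insert]
      push_neg
      exact ⟨fun h => hne h.symm, hu'F i⟩
  have s4 := matchPoly_pendants (α := α) (by omega : 2 ≤ r) (m - d - 1)
    ((pathHypergraph r d w).removeVerts {w ((d + 1) / 2 * (r - 1))})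
    (T1.removeVerts {w ((d + 1) / 2 * (r - 1))})
    (w (((d + 1) / 2 - 1) * (r - 1))) (removeVerts_wf hwP _) (removeVerts_unif huP _)
    hattach x
  -- step 5 : double removal identification
  have h5 : (((pathHypergraph r d w).removeVerts
        {w ((d + 1) / 2 * (r - 1))}).removeVerts {w (((d + 1) / 2 - 1) * (r - 1))})
      = (pathHypergraph r d w).removeVerts
        {w (((d + 1) / 2 - 1) * (r - 1)), w ((d + 1) / 2 * (r - 1))} := by
    rw [removeVerts_removeVerts]
    congr 1
    ext z
    simp only [Finset.mem_union, Finset.mem_singleton, Finset.mem_insert]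
    tauto
  rw [h5] at s4
  -- step 6 : the three path-removal decompositions
  have s7 := matchPoly_path_remove_single (t := (d + 1) / 2) hr hw (by omega) (by omega) x
  have s8 := matchPoly_path_remove_single (t := (d + 1) / 2 - 1) hr hw (by omega)
    (by omega) x
  rw [show (d + 1) / 2 - 1 + 1 = (d + 1) / 2 from by omega,
    show (d + 1) / 2 - 1 - 1 = (d + 1) / 2 - 2 from by omega,
    show d - ((d + 1) / 2 - 1) - 1 = d - (d + 1) / 2 from by omega] at s8
  have s6 := matchPoly_path_remove_pair (t := (d + 1) / 2 - 1) hr hw (by omega)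
    (by omega) x
  rw [show (d + 1) / 2 - 1 + 1 = (d + 1) / 2 from by omega,
    show (d + 1) / 2 - 1 + 2 = (d + 1) / 2 + 1 from by omega,
    show (d + 1) / 2 - 1 - 1 = (d + 1) / 2 - 2 from by omega,
    show d - ((d + 1) / 2 - 1) - 2 = d - (d + 1) / 2 - 1 from by omega] at s6
  -- bridges to the Q's
  have hshift : ∀ p s : ℕ, p + s = d →
      Set.InjOn (fun j => w (j + s * (r - 1))) (Set.Iic (p * (r - 1))) := by
    intro p s hps a ha b hb hab
    have hps' : p * (r - 1) + s * (r - 1) = d * (r - 1) := by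
      calc p * (r-1) + s * (r-1) = (p + s) * (r-1) := by ring
        _ = d * (r-1) := by rw [hps]
    have ha' : a + s * (r - 1) ≤ d * (r - 1) := by
      have := Set.mem_Iic.1 ha
      omega
    have hb' : b + s * (r - 1) ≤ d * (r - 1) := by
      have := Set.mem_Iic.1 hb
      omega
    have := hw (Set.mem_Iic.2 ha') (Set.mem_Iic.2 hb') hab
    omega
  have hwL1 : Set.InjOn w (Set.Iic (((d + 1) / 2 - 1) * (r - 1))) :=
    hw.mono (Set.Iic_subset_Iic.2 (Nat.mul_le_mul_right _ (by omega)))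
  have hwL2 : Set.InjOn w (Set.Iic (((d + 1) / 2 - 2) * (r - 1))) :=
    hw.mono (Set.Iic_subset_Iic.2 (Nat.mul_le_mul_right _ (by omega)))
  have hwR1 : Set.InjOn (fun j => w (j + ((d + 1) / 2 + 1) * (r - 1)))
      (Set.Iic ((d - (d + 1) / 2 - 1) * (r - 1))) := hshift _ _ (by omega)
  have hwR2 : Set.InjOn (fun j => w (j + (d + 1) / 2 * (r - 1)))
      (Set.Iic ((d - (d + 1) / 2) * (r - 1))) := hshift _ _ (by omega)
  have hQ1' : Q1.matchPoly r x
      = (pathHypergraph r ((d + 1) / 2 - 1) w).matchPoly r x :=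
    matchPoly_loosePath_congr (by omega) hQ1 (pathHypergraph_isLoosePath hwL1) x
  have hQ2' : Q2.matchPoly r x
      = (pathHypergraph r (d - (d + 1) / 2 - 1)
          (fun j => w (j + ((d + 1) / 2 + 1) * (r - 1)))).matchPoly r x :=
    matchPoly_loosePath_congr (by omega) hQ2 (pathHypergraph_isLoosePath hwR1) x
  have hQ3' : Q3.matchPoly r x
      = (pathHypergraph r ((d + 1) / 2 - 2) w).matchPoly r x :=
    matchPoly_loosePath_congr (by omega) hQ3 (pathHypergraph_isLoosePath hwL2) x
  have hQ4' : Q4.matchPoly r x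
      = x ^ (r - 1) * (pathHypergraph r (d - (d + 1) / 2)
            (fun j => w (j + (d + 1) / 2 * (r - 1)))).matchPoly r x
        - x ^ (r - 2) * (pathHypergraph r (d - (d + 1) / 2 - 1)
            (fun j => w (j + ((d + 1) / 2 + 1) * (r - 1)))).matchPoly r x :=
    matchPoly_loosePath_rec hr (by omega) hQ4
      (pathHypergraph_isLoosePath hwR2) (pathHypergraph_isLoosePath hwR1) x
  -- exponent bookkeeping
  have eA : (m - d - 1) * (r - 1) = (m - d - 1 - 1) * (r - 1) + (r - 1) := by
    have e : (m - d - 1 - 1 + 1) * (r - 1) = (m - d - 1 - 1) * (r - 1) + (r - 1) := by ring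
    rw [show m - d - 1 - 1 + 1 = m - d - 1 from by omega] at e
    omega
  have eB : (m - d) * (r - 1) = (m - d - 1 - 1) * (r - 1) + ((r - 1) + (r - 1)) := by
    have e : (m - d - 1 - 1 + 2) * (r - 1)
        = (m - d - 1 - 1) * (r - 1) + ((r - 1) + (r - 1)) := by ring
    rw [show m - d - 1 - 1 + 2 = m - d from by omega] at e
    omega
  have eC : (m - d + 1) * (r - 1) - 2
      = (m - d - 1 - 1) * (r - 1) + ((r - 1) + (2 * r - 4)) := by
    have e : (m - d - 1 - 1 + 3) * (r - 1)
        = (m - d - 1 - 1) * (r - 1) + ((r - 1) + ((r - 1) + (r - 1))) := by ring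
    rw [show m - d - 1 - 1 + 3 = m - d + 1 from by omega] at e
    omega
  have eD : (m - d) * (r - 1) - 2 = (m - d - 1 - 1) * (r - 1) + (2 * r - 4) := by
    have e : (m - d - 1 - 1 + 2) * (r - 1)
        = (m - d - 1 - 1) * (r - 1) + ((r - 1) + (r - 1)) := by ring
    rw [show m - d - 1 - 1 + 2 = m - d from by omega] at e
    omega
  have hxA : x ^ ((m - d - 1) * (r - 1))
      = x ^ ((m - d - 1 - 1) * (r - 1)) * x ^ (r - 1) := by
    rw [eA, pow_add]
  have hxB : x ^ ((m - d) * (r - 1))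
      = x ^ ((m - d - 1 - 1) * (r - 1)) * (x ^ (r - 1) * x ^ (r - 1)) := by
    rw [eB, pow_add, pow_add]
  have hxC : x ^ ((m - d + 1) * (r - 1) - 2)
      = x ^ ((m - d - 1 - 1) * (r - 1)) * (x ^ (r - 1) * x ^ (2 * r - 4)) := by
    rw [eC, pow_add, pow_add]
  have hxD : x ^ ((m - d) * (r - 1) - 2)
      = x ^ ((m - d - 1 - 1) * (r - 1)) * x ^ (2 * r - 4) := by
    rw [eD, pow_add]
  have hxE : x ^ (3 * r - 6) = x ^ (2 * r - 4) * x ^ (r - 2) := by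
    rw [← pow_add]
    congr 1
    omega
  rw [hxA] at s2 s4
  rw [hxE] at s6
  rw [s1, s2, s4, s6, s7, s8, hxB, hxC, hxD, hQ1', hQ2', hQ3', hQ4']
  ring
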